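/- arXiv:0706.2725 — 3 statements merged into one kernel-verified Lean document; each statement's English description precedes it below -/
import Mathlib

section
/- Let V be a finite nonempty type and let A : V → V → Prop be an irreflexive relation, with D = (V, A) and Z(D) its Z-mapping graph. A subgraph M of Z(D) is a perfect matching if and only if there exists a permutation σ of V such that A v (σ v) holds for every v ∈ V and the edge set of M is exactly { {Sum.inl v, Sum.inr (σ v)} : v ∈ V }. (Such a σ is automatically fixed-point-free since A is irreflexive.) -/
/-- The Z-mapping graph of a loopless digraph `D = (V, A)`: the simple graph on `V ⊕ V`
whose edges are exactly the unordered pairs `{Sum.inl u, Sum.inr v}` for arcs `A u v`. -/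
def zMappingGraph {V : Type*} (A : V → V → Prop) : SimpleGraph (V ⊕ V) where
  Adj x y := (∃ u v, A u v ∧ x = Sum.inl u ∧ y = Sum.inr v) ∨
             (∃ u v, A u v ∧ x = Sum.inr v ∧ y = Sum.inl u)
  symm := by
    constructor
    rintro x y (⟨u, v, h, rfl, rfl⟩ | ⟨u, v, h, rfl, rfl⟩)
    · exact Or.inr ⟨u, v, h, rfl, rfl⟩
    · exact Or.inl ⟨u, v, h, rfl, rfl⟩
  loopless := by
    constructor
    rintro x (⟨u, v, h, rfl, h2⟩ | ⟨u, v, h, rfl, h2⟩) <;> simp at h2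

/-- A subgraph `M` of the Z-mapping graph of a loopless digraph `D = (V, A)` is a perfect
matching if and only if there is a permutation `σ` of `V` with `A v (σ v)` for all `v`
whose associated edges `{Sum.inl v, Sum.inr (σ v)}` are exactly the edges of `M`. -/
theorem isPerfectMatching_iff_exists_perm {V : Type*} [Fintype V] [Nonempty V]
    (A : V → V → Prop) (hA : Irreflexive A) (M : (zMappingGraph A).Subgraph) :
    M.IsPerfectMatching ↔
      ∃ σ : Equiv.Perm V, (∀ v, A v (σ v)) ∧
        M.edgeSet = {e : Sym2 (V ⊕ V) | ∃ v : V, e = s(Sum.inl v, Sum.inr (σ v))} := by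
  constructor
  · rintro ⟨hm, hs⟩
    -- unique neighbor of each vertex
    have hu : ∀ x : V ⊕ V, ∃! y, M.Adj x y := fun x => hm (hs x)
    have hf : ∀ v : V, ∃ w : V, A v w ∧ M.Adj (Sum.inl v) (Sum.inr w) := by
      intro v
      obtain ⟨y, hy, -⟩ := hu (Sum.inl v)
      rcases M.adj_sub hy with ⟨u, w, haw, h1, h2⟩ | ⟨u, w, haw, h1, h2⟩
      · cases h1; exact ⟨w, haw, h2 ▸ hy⟩
      · exact absurd h1 (by simp)
    have hg : ∀ w : V, ∃ v : V, A v w ∧ M.Adj (Sum.inl v) (Sum.inr w) := by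
      intro w
      obtain ⟨y, hy, -⟩ := hu (Sum.inr w)
      rcases M.adj_sub hy with ⟨u, w', haw, h1, h2⟩ | ⟨u, w', haw, h1, h2⟩
      · exact absurd h1 (by simp)
      · cases Sum.inr.inj h1; exact ⟨u, haw, (h2 ▸ hy).symm⟩
    choose f hfA hfM using hf
    choose g hgA hgM using hg
    have hleft : ∀ v, g (f v) = v := by
      intro v
      have := (hu (Sum.inr (f v))).unique (hgM (f v)).symm (hfM v).symm
      exact Sum.inl.inj this
    have hright : ∀ w, f (g w) = w := by
      intro w
      have := (hu (Sum.inl (g w))).unique (hfM (g w)) (hgM w)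
      exact Sum.inr.inj this
    refine ⟨⟨f, g, hleft, hright⟩, hfA, ?_⟩
    ext e
    induction e with
    | _ x y =>
      simp only [SimpleGraph.Subgraph.mem_edgeSet, Set.mem_setOf_eq]
      constructor
      · intro hxy
        rcases M.adj_sub hxy with ⟨u, w, haw, h1, h2⟩ | ⟨u, w, haw, h1, h2⟩
        · subst h1; subst h2
          have : Sum.inr w = Sum.inr (f u) := (hu (Sum.inl u)).unique hxy (hfM u)
          exact ⟨u, by rw [Sum.inr.inj this]; rfl⟩
        · subst h1; subst h2
          have : Sum.inr w = Sum.inr (f u) :=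
            (hu (Sum.inl u)).unique hxy.symm (hfM u)
          exact ⟨u, by rw [Sum.inr.inj this, Sym2.eq_swap]; rfl⟩
      · rintro ⟨v, hv⟩
        rw [Sym2.eq_iff] at hv
        rcases hv with ⟨rfl, rfl⟩ | ⟨rfl, rfl⟩
        · exact hfM v
        · exact (hfM v).symm
  · rintro ⟨σ, hσA, hE⟩
    have hadj : ∀ x y, M.Adj x y ↔ ∃ v, s(x, y) = s(Sum.inl v, Sum.inr (σ v)) := by
      intro x y
      rw [← SimpleGraph.Subgraph.mem_edgeSet, hE]
      rfl
    have hAl : ∀ v : V, M.Adj (Sum.inl v) (Sum.inr (σ v)) := fun v => (hadj _ _).2 ⟨v, rfl⟩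
    constructor
    · intro x _
      match x with
      | Sum.inl v =>
        refine ⟨Sum.inr (σ v), hAl v, ?_⟩
        intro y hy
        obtain ⟨u, hu⟩ := (hadj _ _).1 hy
        rw [Sym2.eq_iff] at hu
        rcases hu with ⟨h1, rfl⟩ | ⟨h1, h2⟩
        · rw [Sum.inl.inj h1]
        · exact absurd h1 (by simp)
      | Sum.inr w =>
        refine ⟨Sum.inl (σ.symm w), ((hadj _ _).2 ⟨σ.symm w, by
          rw [Sym2.eq_swap, σ.apply_symm_apply]⟩), ?_⟩
        intro y hy
        obtain ⟨u, hu⟩ := (hadj _ _).1 hy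
        rw [Sym2.eq_iff] at hu
        rcases hu with ⟨h1, h2⟩ | ⟨h1, rfl⟩
        · exact absurd h1 (by simp)
        · cases Sum.inr.inj h1
          rw [σ.symm_apply_apply]
    · intro x
      match x with
      | Sum.inl v => exact M.edge_vert (hAl v)
      | Sum.inr w =>
        exact M.edge_vert ((hadj _ _).2
          ⟨σ.symm w, by rw [Sym2.eq_swap, σ.apply_symm_apply]⟩)
end

section
/- Let V be a finite type with n elements and let σ be a fixed-point-free permutation of V. Define the matrix M_σ : Matrix V V ℚ by M_σ u v = (if u = v then 1 else 0) − (if u = σ v then 1 else 0). Then the rank of M_σ over ℚ equals n minus the number of cycles of σ, i.e., Matrix.rank M_σ = n − σ.cycleType.card. -/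
open Matrix Equiv

/-- The rank of the incidence matrix of the functional digraph of a fixed-point-free
permutation `σ` of an `n`-element type equals `n` minus the number of cycles of `σ`. -/
theorem rank_perm_incidence_matrix {V : Type*} [Fintype V] [DecidableEq V] (n : ℕ)
    (hn : Fintype.card V = n) (σ : Equiv.Perm V) (hσ : ∀ v, σ v ≠ v) :
    Matrix.rank (fun u v : V =>
        ((if u = v then 1 else 0) - (if u = σ v then 1 else 0) : ℚ)) =
      n - Multiset.card σ.cycleType := by
  classical
  set M : Matrix V V ℚ :=
    fun u v => ((if u = v then 1 else 0) - (if u = σ v then 1 else 0) : ℚ) with hM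
  have hmul : ∀ x : V → ℚ, M.mulVec x = fun u => x u - x (σ⁻¹ u) := by
    intro x
    funext u
    have h1 : (∑ v, (if u = v then (1:ℚ) else 0) * x v) = x u := by
      simp [ite_mul]
    have h2 : (∑ v, (if u = σ v then (1:ℚ) else 0) * x v) = x (σ⁻¹ u) := by
      rw [Finset.sum_eq_single (σ⁻¹ u)]
      · simp
      · intro b _ hb
        rw [if_neg, zero_mul]
        intro h; exact hb (by simp [h])
      · simp
    simp only [Matrix.mulVec, dotProduct, hM, sub_mul, Finset.sum_sub_distrib, h1, h2]
  -- kernel characterization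
  have hker : ∀ x : V → ℚ, M.mulVecLin x = 0 ↔ ∀ v, x (σ v) = x v := by
    intro x
    rw [Matrix.mulVecLin_apply, hmul]
    constructor
    · intro h v
      have h2 := congrFun h (σ v)
      simp only [Pi.zero_apply, sub_eq_zero, Equiv.Perm.coe_inv, Equiv.symm_apply_apply] at h2
      exact h2
    · intro h
      funext u
      have h2 := h (σ⁻¹ u)
      rw [Equiv.Perm.coe_inv, Equiv.apply_symm_apply] at h2
      simp [h2]
  -- setoid of same-cycle
  let s : Setoid V := ⟨σ.SameCycle, ⟨fun x => Equiv.Perm.SameCycle.refl σ x,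
    fun h => h.symm, fun h h' => h.trans h'⟩⟩
  haveI : DecidableEq (Quotient s) := fun a b =>
    Quotient.recOnSubsingleton₂ a b fun x y =>
      decidable_of_iff (σ.SameCycle x y) (Quotient.eq (r := s)).symm
  -- linear map from functions on quotient
  let φ : (Quotient s → ℚ) →ₗ[ℚ] (V → ℚ) :=
    { toFun := fun g v => g ⟦v⟧
      map_add' := by intros; rfl
      map_smul' := by intros; rfl }
  have hφinj : Function.Injective φ := by
    intro g g' h
    funext q
    induction q using Quotient.inductionOn with
    | h v => exact congrFun h v
  have hφrange : LinearMap.range φ = LinearMap.ker M.mulVecLin := by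
    ext x
    simp only [LinearMap.mem_range, LinearMap.mem_ker]
    rw [hker]
    constructor
    · rintro ⟨g, rfl⟩ v
      show g ⟦σ v⟧ = g ⟦v⟧
      congr 1
      exact Quotient.sound ((Equiv.Perm.sameCycle_apply_right).mpr (Equiv.Perm.SameCycle.refl σ v)).symm
    · intro h
      have key : ∀ (u v : V), σ.SameCycle u v → x u = x v := by
        have hnat : ∀ (k : ℕ) (u : V), x ((σ ^ k) u) = x u := by
          intro k
          induction k with
          | zero => intro u; simp
          | succ k ih => intro u; rw [pow_succ, Equiv.Perm.mul_apply, ih (σ u)]; exact h u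
        rintro u v ⟨i, rfl⟩
        cases i with
        | ofNat k => simpa using (hnat k u).symm
        | negSucc k =>
          have h3 := hnat (k+1) ((σ ^ (k+1))⁻¹ u)
          rw [Equiv.Perm.coe_inv, Equiv.apply_symm_apply] at h3
          rw [zpow_negSucc]
          exact h3
      refine ⟨Quotient.lift x (fun a b hab => key a b hab), rfl⟩
  -- count quotient classes
  have hcard : Fintype.card (Quotient s) = Multiset.card σ.cycleType := by
    rw [Equiv.Perm.cycleType_def, Multiset.card_map]
    have : Fintype.card (Quotient s) = Fintype.card σ.cycleFactorsFinset := by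
      apply Fintype.card_congr
      refine Equiv.ofBijective (fun q => Quotient.liftOn q
        (fun v => (⟨σ.cycleOf v, Equiv.Perm.cycleOf_mem_cycleFactorsFinset_iff.mpr
          (Equiv.Perm.mem_support.mpr (hσ v))⟩ : σ.cycleFactorsFinset))
        (fun a b hab => Subtype.ext hab.cycleOf_eq)) ⟨?_, ?_⟩
      · intro q q'
        induction q using Quotient.inductionOn with
        | h u =>
        induction q' using Quotient.inductionOn with
        | h v =>
        intro h
        have h' : σ.cycleOf u = σ.cycleOf v := congrArg Subtype.val h
        apply Quotient.sound
        have hv : v ∈ (σ.cycleOf v).support :=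
          Equiv.Perm.mem_support_cycleOf_iff.mpr
            ⟨Equiv.Perm.SameCycle.refl σ v, Equiv.Perm.mem_support.mpr (hσ v)⟩
        rw [← h'] at hv
        exact (Equiv.Perm.mem_support_cycleOf_iff.mp hv).1
      · rintro ⟨c, hc⟩
        have hne : c.support.Nonempty := by
          rw [Finset.nonempty_iff_ne_empty, ne_eq, Equiv.Perm.support_eq_empty_iff]
          exact (Equiv.Perm.mem_cycleFactorsFinset_iff.mp hc).1.ne_one
        obtain ⟨a, ha⟩ := hne
        refine ⟨⟦a⟧, ?_⟩
        exact Subtype.ext (Equiv.Perm.cycle_is_cycleOf ha hc).symm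
    rw [this, Fintype.card_coe]; rfl
  -- rank-nullity
  have hfr : Module.finrank ℚ (LinearMap.ker M.mulVecLin) = Multiset.card σ.cycleType := by
    rw [← hφrange, ← hcard, ← (LinearEquiv.ofInjective φ hφinj).finrank_eq]
    rw [Module.finrank_fintype_fun_eq_card]
  have hrn := LinearMap.finrank_range_add_finrank_ker M.mulVecLin
  have hdom : Module.finrank ℚ (V → ℚ) = n := by
    rw [Module.finrank_fintype_fun_eq_card, hn]
  have hsum : Matrix.rank M + Multiset.card σ.cycleType = n := by
    rw [Matrix.rank, ← hfr, ← hdom]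
    exact hrn
  omega
end

section
/- Let V be a finite type with n elements, n ≥ 2, and let σ be a fixed-point-free permutation of V. Define the matrix M_σ : Matrix V V ℚ by M_σ u v = (if u = v then 1 else 0) − (if u = σ v then 1 else 0). Then σ is a single cycle through all n vertices (i.e., σ.IsCycle and σ.support = Finset.univ) if and only if Matrix.rank M_σ = n − 1. -/
section Aux

variable {V : Type*} [Fintype V] [DecidableEq V]

private lemma ker_iff (σ : Equiv.Perm V) (x : V → ℚ) :
    (Matrix.mulVecLin (fun u v : V =>
        ((if u = v then 1 else 0) - (if u = σ v then 1 else 0) : ℚ))) x = 0 ↔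
      ∀ v, x (σ v) = x v := by
  have key : ∀ u, (Matrix.mulVecLin (fun u v : V =>
      ((if u = v then 1 else 0) - (if u = σ v then 1 else 0) : ℚ))) x u
      = x u - x (σ⁻¹ u) := by
    intro u
    change (∑ v, ((if u = v then 1 else 0) - (if u = σ v then 1 else 0) : ℚ) * x v) = _
    simp only [sub_mul, one_mul, zero_mul,
      Finset.sum_sub_distrib, ite_mul]
    congr 1
    · simp [Finset.sum_ite_eq]
    · have : ∀ v : V, (u = σ v) = (σ⁻¹ u = v) := by
        intro v
        have := (Equiv.Perm.inv_eq_iff_eq (f := σ) (x := u) (y := v))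
        simp only [eq_iff_iff]
        exact this.symm
      simp only [this]
      simp [Finset.sum_ite_eq]
  constructor
  · intro h v
    have := congrFun h (σ v)
    rw [key] at this
    simp at this
    linarith [this]
  · intro h
    funext u
    rw [key]
    have := h (σ⁻¹ u)
    simp at this
    simp [this]

private lemma invariant_zpow (σ : Equiv.Perm V) (x : V → ℚ) (h : ∀ v, x (σ v) = x v) :
    ∀ (i : ℤ) (v : V), x ((σ ^ i) v) = x v := by
  have hinv : ∀ v, x (σ⁻¹ v) = x v := by
    intro v
    have := h (σ⁻¹ v)
    simpa using this.symm
  intro i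
  induction i using Int.induction_on with
  | zero => simp
  | succ k ih =>
      intro v
      have : (σ ^ ((k : ℤ) + 1)) v = σ ((σ ^ (k : ℤ)) v) := by
        have h1 : (k : ℤ) + 1 = 1 + k := by ring
        rw [h1, zpow_add, zpow_one, Equiv.Perm.mul_apply]
      rw [this, h, ih]
  | pred k ih =>
      intro v
      have : (σ ^ (-(k : ℤ) - 1)) v = σ⁻¹ ((σ ^ (-(k : ℤ))) v) := by
        have h1 : -(k : ℤ) - 1 = (-1) + (-k) := by ring
        rw [h1, zpow_add, zpow_neg_one, Equiv.Perm.mul_apply]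
      rw [this, hinv, ih]

end Aux

/-- A fixed-point-free permutation `σ` of an `n`-element type (`n ≥ 2`) is a single cycle
through all vertices if and only if the incidence matrix of its functional digraph
has rank `n - 1`. -/
theorem isCycle_iff_rank_eq {V : Type*} [Fintype V] [DecidableEq V] (n : ℕ)
    (hn : Fintype.card V = n) (h2 : 2 ≤ n) (σ : Equiv.Perm V) (hσ : ∀ v, σ v ≠ v) :
    (σ.IsCycle ∧ σ.support = Finset.univ) ↔
      Matrix.rank (fun u v : V =>
          ((if u = v then 1 else 0) - (if u = σ v then 1 else 0) : ℚ)) = n - 1 := by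
  classical
  have hVne : Nonempty V := by
    rw [← Fintype.card_pos_iff, hn]; omega
  set M : Matrix V V ℚ := fun u v : V =>
      ((if u = v then 1 else 0) - (if u = σ v then 1 else 0) : ℚ) with hM
  have hsupp : σ.support = Finset.univ := by
    ext v; simp [Equiv.Perm.mem_support, hσ v]
  have hrn : M.rank + Module.finrank ℚ (LinearMap.ker M.mulVecLin) = n := by
    rw [Matrix.rank, LinearMap.finrank_range_add_finrank_ker]
    simp [hn]
  constructor
  · rintro ⟨hc, -⟩
    -- kernel is the span of the constant function 1
    have hall : ∀ a b : V, σ.SameCycle a b := by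
      intro a b
      obtain ⟨x0, -, hx0⟩ := hc
      exact (hx0 (hσ a)).symm.trans (hx0 (hσ b))
    have hker : LinearMap.ker M.mulVecLin = Submodule.span ℚ {fun _ : V => (1 : ℚ)} := by
      apply le_antisymm
      · intro x hx
        rw [LinearMap.mem_ker, ker_iff] at hx
        obtain ⟨a⟩ := hVne
        have hxc : x = x a • (fun _ : V => (1 : ℚ)) := by
          funext v
          obtain ⟨i, hi⟩ := hall a v
          have := invariant_zpow σ x hx i a
          rw [hi] at this
          simp [this]
        rw [hxc]
        exact Submodule.smul_mem _ _ (Submodule.mem_span_singleton_self _)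
      · rw [Submodule.span_le, Set.singleton_subset_iff]
        rw [SetLike.mem_coe, LinearMap.mem_ker, ker_iff]
        intro v; rfl
    have h1 : Module.finrank ℚ (LinearMap.ker M.mulVecLin) = 1 := by
      rw [hker]
      exact finrank_span_singleton (by
        intro h
        have := congrFun h (Classical.arbitrary V)
        simpa using this)
    omega
  · intro hrank
    refine ⟨?_, hsupp⟩
    by_contra hnc
    -- there exist two points in different cycles
    rw [Equiv.Perm.IsCycle] at hnc
    push_neg at hnc
    obtain ⟨a⟩ := hVne
    obtain ⟨b, -, hab⟩ := hnc a (hσ a)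
    -- two independent kernel vectors
    set f : V → ℚ := fun v => if σ.SameCycle a v then 1 else 0 with hf
    set g : V → ℚ := fun v => if σ.SameCycle b v then 1 else 0 with hg
    have hfk : f ∈ LinearMap.ker M.mulVecLin := by
      rw [LinearMap.mem_ker, ker_iff]
      intro v
      simp [hf, Equiv.Perm.sameCycle_apply_right]
    have hgk : g ∈ LinearMap.ker M.mulVecLin := by
      rw [LinearMap.mem_ker, ker_iff]
      intro v
      simp [hg, Equiv.Perm.sameCycle_apply_right]
    have hfa : f a = 1 := by simp [hf, Equiv.Perm.SameCycle.refl σ a]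
    have hfb : f b = 0 := by simp [hf, hab]
    have hga : g a = 0 := by
      simp only [hg, ite_eq_right_iff]
      intro h; exact absurd h.symm hab
    have hgb : g b = 1 := by simp [hg, Equiv.Perm.SameCycle.refl σ b]
    have hli : LinearIndependent ℚ ![f, g] := by
      rw [LinearIndependent.pair_iff]
      intro s t hst
      have h1 := congrFun hst a
      have h2 := congrFun hst b
      simp [hfa, hfb, hga, hgb] at h1 h2
      exact ⟨h1, h2⟩
    have hspan : Submodule.span ℚ (Set.range ![f, g]) ≤ LinearMap.ker M.mulVecLin := by
      rw [Submodule.span_le]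
      rintro x ⟨i, rfl⟩
      fin_cases i <;> simpa using (by assumption : _ ∈ LinearMap.ker M.mulVecLin)
    have h2le : 2 ≤ Module.finrank ℚ (LinearMap.ker M.mulVecLin) := by
      have := Submodule.finrank_mono hspan
      rwa [finrank_span_eq_card hli, Fintype.card_fin] at this
    omega
end
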